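/- arXiv:2601.02733 — 4 statements merged into one kernel-verified Lean document; each statement's English description precedes it below -/
import Mathlib

section
/- The subspace m = span{e_1, e_2, e_3, e_4, e_5, e_6} of sl(3, ℝ) is invariant under the adjoint action Ad(h)X = h X h^{-1} for every h in the subgroup H of matrices [[e^t cos s, e^t sin s, 0], [-e^t sin s, e^t cos s, 0], [0, 0, e^{-2t}]]. -/
open Matrix Real

noncomputable section

abbrev M3 := Matrix (Fin 3) (Fin 3) ℝ

def e1 : M3 := !![1,0,0; 0,-1,0; 0,0,0]
def e2 : M3 := !![0,1,0; 1,0,0; 0,0,0]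
def e3 : M3 := !![0,0,Real.sqrt 2; 0,0,0; 0,0,0]
def e4 : M3 := !![0,0,0; 0,0,Real.sqrt 2; 0,0,0]
def e5 : M3 := !![0,0,0; 0,0,0; -Real.sqrt 2,0,0]
def e6 : M3 := !![0,0,0; 0,0,0; 0,-Real.sqrt 2,0]
def e7 : M3 := !![1/Real.sqrt 3,0,0; 0,1/Real.sqrt 3,0; 0,0,-2/Real.sqrt 3]
def e8 : M3 := !![0,1,0; -1,0,0; 0,0,0]

/-- element of the subgroup `H` -/
def hMat (t s : ℝ) : M3 :=
  !![Real.exp t * Real.cos s, Real.exp t * Real.sin s, 0;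
     -(Real.exp t * Real.sin s), Real.exp t * Real.cos s, 0;
     0, 0, Real.exp (-2*t)]

/-- the bilinear form `⟨X,Y⟩ = -(1/2) Tr (X Y)` -/
def ip (X Y : M3) : ℝ := -(1/2) * (X * Y).trace

/-- the subspace `m = span{e1,…,e6}` -/
def mSp : Submodule ℝ M3 := Submodule.span ℝ {e1, e2, e3, e4, e5, e6}

/-- conditions determining the almost complex structure `J` on `m` -/
def isJ (J : M3 →ₗ[ℝ] M3) : Prop :=
  J e1 = -e2 ∧ J e2 = e1 ∧ J e3 = e4 ∧ J e4 = -e3 ∧ J e5 = e6 ∧ J e6 = -e5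

/-- conditions determining the complex structure `J₁` on `m` -/
def isJ1 (J1 : M3 →ₗ[ℝ] M3) : Prop :=
  J1 e1 = e2 ∧ J1 e2 = -e1 ∧ J1 e3 = e4 ∧ J1 e4 = -e3 ∧ J1 e5 = e6 ∧ J1 e6 = -e5

/-- conditions determining the `F`-structure on `m` -/
def isF (F : M3 →ₗ[ℝ] M3) : Prop :=
  F e1 = 0 ∧ F e2 = 0 ∧ F e3 = e4 ∧ F e4 = -e3 ∧ F e5 = -e6 ∧ F e6 = e5

/-- auxiliary submodule given by linear conditions -/
def Scond : Submodule ℝ M3 where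
  carrier := {X | X 2 2 = 0 ∧ X 0 0 + X 1 1 = 0 ∧ X 0 1 = X 1 0}
  add_mem' := by
    rintro a b ⟨h1, h2, h3⟩ ⟨g1, g2, g3⟩
    refine ⟨?_, ?_, ?_⟩ <;> simp [Matrix.add_apply, h1, g1, h3, g3] <;> linarith
  zero_mem' := by simp
  smul_mem' := by
    rintro c a ⟨h1, h2, h3⟩
    refine ⟨?_, ?_, ?_⟩ <;> simp [Matrix.smul_apply, h1, h3] <;>
      · rw [← mul_add, h2, mul_zero]

lemma sqrt2_ne : Real.sqrt 2 ≠ 0 := by positivity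

lemma Scond_le_mSp : Scond ≤ mSp := by
  rintro X ⟨h1, h2, h3⟩
  have m1 : e1 ∈ mSp := Submodule.subset_span (by simp)
  have m2 : e2 ∈ mSp := Submodule.subset_span (by simp)
  have m3 : e3 ∈ mSp := Submodule.subset_span (by simp)
  have m4 : e4 ∈ mSp := Submodule.subset_span (by simp)
  have m5 : e5 ∈ mSp := Submodule.subset_span (by simp)
  have m6 : e6 ∈ mSp := Submodule.subset_span (by simp)
  have hX : X = X 0 0 • e1 + X 0 1 • e2 + (X 0 2 / Real.sqrt 2) • e3 +
      (X 1 2 / Real.sqrt 2) • e4 + (-(X 2 0) / Real.sqrt 2) • e5 +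
      (-(X 2 1) / Real.sqrt 2) • e6 := by
    ext i j
    fin_cases i <;> fin_cases j <;>
      simp [e1, e2, e3, e4, e5, e6, Matrix.add_apply, Matrix.smul_apply, h1, h3,
        div_mul_cancel₀, sqrt2_ne, Matrix.vecHead, Matrix.vecTail] <;>
      first
        | linarith
        | ring1
  rw [hX]
  exact Submodule.add_mem _ (Submodule.add_mem _ (Submodule.add_mem _
    (Submodule.add_mem _ (Submodule.add_mem _ (Submodule.smul_mem _ _ m1)
    (Submodule.smul_mem _ _ m2)) (Submodule.smul_mem _ _ m3))
    (Submodule.smul_mem _ _ m4)) (Submodule.smul_mem _ _ m5))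
    (Submodule.smul_mem _ _ m6)

lemma mSp_le_Scond : mSp ≤ Scond := by
  rw [mSp, Submodule.span_le]
  rintro X hX
  simp only [Set.mem_insert_iff, Set.mem_singleton_iff] at hX
  rcases hX with rfl | rfl | rfl | rfl | rfl | rfl <;>
    refine ⟨?_, ?_, ?_⟩ <;>
      simp [e1, e2, e3, e4, e5, e6, Matrix.vecHead, Matrix.vecTail] <;> norm_num

lemma hMat_inv (t s : ℝ) : (hMat t s)⁻¹ = hMat (-t) (-s) := by
  have het : Real.exp t * Real.exp (-t) = 1 := by
    rw [← Real.exp_add]; simp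
  have hcs : Real.cos s ^ 2 + Real.sin s ^ 2 = 1 := Real.cos_sq_add_sin_sq s
  apply Matrix.inv_eq_right_inv
  have het2 : Real.exp (-(2 * t)) * Real.exp (2 * t) = 1 := by
    rw [← Real.exp_add]; norm_num
  ext i j
  fin_cases i <;> fin_cases j <;>
    simp [hMat, Matrix.mul_apply, Fin.sum_univ_three, Matrix.one_apply,
      Real.cos_neg, Real.sin_neg, Matrix.vecMul, dotProduct,
      Matrix.vecHead, Matrix.vecTail] <;>
    first
      | ring1
      | linear_combination Real.exp t * Real.exp (-t) * hcs + het
      | (rw [← Real.exp_add]; norm_num)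
      | linear_combination (-(Real.exp t * Real.exp (-t))) * hcs - het

theorem stmt2 : ∀ t s : ℝ, ∀ X ∈ mSp, hMat t s * X * (hMat t s)⁻¹ ∈ mSp := by
  intro t s X hX
  obtain ⟨h1, h2, h3⟩ := mSp_le_Scond hX
  apply Scond_le_mSp
  rw [hMat_inv]
  have hcs : Real.cos s ^ 2 + Real.sin s ^ 2 = 1 := Real.cos_sq_add_sin_sq s
  refine ⟨?_, ?_, ?_⟩ <;>
    simp [hMat, Matrix.mul_apply, Fin.sum_univ_three, Real.cos_neg, Real.sin_neg,
      Matrix.vecMul, dotProduct, Matrix.vecHead, Matrix.vecTail, h1]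
  · linear_combination (Real.exp t * Real.exp (-t) * (X 0 0 + X 1 1)) * hcs +
      (Real.exp t * Real.exp (-t)) * h2
  · linear_combination (Real.exp t * Real.exp (-t) * (X 0 1 - X 1 0)) * hcs +
      (Real.exp t * Real.exp (-t)) * h3
end
end

section
/- The complex structure J on m = span{e_1,…,e_6} defined by Je_1 = -e_2, Je_3 = e_4, Je_5 = e_6 (and J² = -Id) commutes with the adjoint action of H: for every h ∈ H of the form [[e^t cos s, e^t sin s, 0], [-e^t sin s, e^t cos s, 0], [0, 0, e^{-2t}]], one has J(h X h^{-1}) = h (JX) h^{-1} for all X ∈ m. -/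
open Matrix Real

noncomputable section

section conj
variable (t s : ℝ)

lemma v1 : Real.exp (-t) = (Real.exp t)⁻¹ := Real.exp_neg t

lemma v2 : Real.exp (-(t*2)) = (Real.exp t^2)⁻¹ := by
  rw [show (-(t*2)) = -(t+t) by ring, Real.exp_neg, Real.exp_add]; ring

lemma v3 : Real.exp (-2*t) = (Real.exp t^2)⁻¹ := by
  rw [show (-2*t) = -(t+t) by ring, Real.exp_neg, Real.exp_add]; ring

lemma v4 : Real.exp (t*2) = Real.exp t^2 := by
  rw [show (t*2) = t+t by ring, Real.exp_add]; ring

lemma v5 : Real.exp (-2*-t) = Real.exp t^2 := by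
  rw [show (-2*-t) = t+t by ring, Real.exp_add]; ring

lemma v6 : Real.exp (-(2*t)) = (Real.exp t^2)⁻¹ := by
  rw [show (-(2*t)) = -(t+t) by ring, Real.exp_neg, Real.exp_add]; ring

lemma v7 : Real.exp (2*t) = Real.exp t^2 := by
  rw [show (2*t) = t+t by ring, Real.exp_add]; ring

lemma hinv : (hMat t s)⁻¹ = hMat (-t) (-s) := by
  apply inv_eq_right_inv
  have p := Real.sin_sq_add_cos_sq s
  have q : Real.cos s ^ 2 = 1 - Real.sin s ^ 2 := by linarith
  ext i j
  fin_cases i <;> fin_cases j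
  all_goals simp [hMat, Matrix.mul_apply, Fin.sum_univ_succ, Matrix.one_apply,
      Matrix.vecHead, Matrix.vecTail, v1 t, v2 t, v3 t, v4 t, v5 t, v6 t, v7 t, q]
  all_goals field_simp
  all_goals nlinarith [p, Real.exp_pos t, sq_nonneg (Real.sin s), sq_nonneg (Real.cos s)]

lemma conj1 : hMat t s * e1 * hMat (-t) (-s) =
    (Real.cos s ^ 2 - Real.sin s ^ 2) • e1 + (-(2 * Real.cos s * Real.sin s)) • e2 := by
  ext i j
  fin_cases i <;> fin_cases j <;>
    simp [hMat, e1, e2, Matrix.mul_apply, Fin.sum_univ_succ, Matrix.vecHead, Matrix.vecTail,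
      v1 t, v2 t, v3 t, v4 t, v5 t, v6 t, v7 t] <;>
    (try simp only [v4 t, v7 t]) <;> (try field_simp) <;> ring

lemma conj2 : hMat t s * e2 * hMat (-t) (-s) =
    (2 * Real.cos s * Real.sin s) • e1 + (Real.cos s ^ 2 - Real.sin s ^ 2) • e2 := by
  ext i j
  fin_cases i <;> fin_cases j <;>
    simp [hMat, e1, e2, Matrix.mul_apply, Fin.sum_univ_succ, Matrix.vecHead, Matrix.vecTail,
      v1 t, v2 t, v3 t, v4 t, v5 t, v6 t, v7 t] <;>
    (try simp only [v4 t, v7 t]) <;> (try field_simp) <;> ring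

lemma conj3 : hMat t s * e3 * hMat (-t) (-s) =
    (Real.exp t ^ 3 * Real.cos s) • e3 + (-(Real.exp t ^ 3 * Real.sin s)) • e4 := by
  ext i j
  fin_cases i <;> fin_cases j <;>
    simp [hMat, e3, e4, Matrix.mul_apply, Fin.sum_univ_succ, Matrix.vecHead, Matrix.vecTail,
      v1 t, v2 t, v3 t, v4 t, v5 t, v6 t, v7 t] <;>
    (try simp only [v4 t, v7 t]) <;> (try field_simp) <;> ring

lemma conj4 : hMat t s * e4 * hMat (-t) (-s) =
    (Real.exp t ^ 3 * Real.sin s) • e3 + (Real.exp t ^ 3 * Real.cos s) • e4 := by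
  ext i j
  fin_cases i <;> fin_cases j <;>
    simp [hMat, e3, e4, Matrix.mul_apply, Fin.sum_univ_succ, Matrix.vecHead, Matrix.vecTail,
      v1 t, v2 t, v3 t, v4 t, v5 t, v6 t, v7 t] <;>
    (try simp only [v4 t, v7 t]) <;> (try field_simp) <;> ring

lemma conj5 : hMat t s * e5 * hMat (-t) (-s) =
    ((Real.exp t ^ 3)⁻¹ * Real.cos s) • e5 + (-((Real.exp t ^ 3)⁻¹ * Real.sin s)) • e6 := by
  ext i j
  fin_cases i <;> fin_cases j <;>
    simp [hMat, e5, e6, Matrix.mul_apply, Fin.sum_univ_succ, Matrix.vecHead, Matrix.vecTail,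
      v1 t, v2 t, v3 t, v4 t, v5 t, v6 t, v7 t] <;>
    (try simp only [v4 t, v7 t]) <;> (try field_simp) <;> ring

lemma conj6 : hMat t s * e6 * hMat (-t) (-s) =
    ((Real.exp t ^ 3)⁻¹ * Real.sin s) • e5 + ((Real.exp t ^ 3)⁻¹ * Real.cos s) • e6 := by
  ext i j
  fin_cases i <;> fin_cases j <;>
    simp [hMat, e5, e6, Matrix.mul_apply, Fin.sum_univ_succ, Matrix.vecHead, Matrix.vecTail,
      v1 t, v2 t, v3 t, v4 t, v5 t, v6 t, v7 t] <;>
    (try simp only [v4 t, v7 t]) <;> (try field_simp) <;> ring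

end conj

theorem stmt9 (J : M3 →ₗ[ℝ] M3) (hJ : isJ J) (t s : ℝ) :
    ∀ X ∈ mSp,
      J (hMat t s * X * (hMat t s)⁻¹) = hMat t s * (J X) * (hMat t s)⁻¹ := by
  obtain ⟨h1, h2, h3, h4, h5, h6⟩ := hJ
  intro X hX
  rw [hinv]
  induction hX using Submodule.span_induction with
  | mem x hx =>
    rcases hx with rfl | rfl | rfl | rfl | rfl | rfl
    · rw [conj1, h1, map_add, LinearMap.map_smul, LinearMap.map_smul, h1, h2, Matrix.mul_neg, Matrix.neg_mul, conj2]
      module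
    · rw [conj2, h2, map_add, LinearMap.map_smul, LinearMap.map_smul, h1, h2, conj1]
      module
    · rw [conj3, h3, map_add, LinearMap.map_smul, LinearMap.map_smul, h3, h4, conj4]
      module
    · rw [conj4, h4, map_add, LinearMap.map_smul, LinearMap.map_smul, h3, h4, Matrix.mul_neg, Matrix.neg_mul, conj3]
      module
    · rw [conj5, h5, map_add, LinearMap.map_smul, LinearMap.map_smul, h5, h6, conj6]
      module
    · rw [conj6, h6, map_add, LinearMap.map_smul, LinearMap.map_smul, h5, h6, Matrix.mul_neg, Matrix.neg_mul, conj5]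
      module
  | zero => simp
  | add x y _ _ hx hy =>
    rw [Matrix.mul_add, Matrix.add_mul, map_add, map_add, hx, hy, Matrix.mul_add, Matrix.add_mul]
  | smul c x _ hx =>
    rw [Matrix.mul_smul, Matrix.smul_mul, LinearMap.map_smul, LinearMap.map_smul, hx,
      Matrix.mul_smul, Matrix.smul_mul]
end
end

section
/- For all u ∈ ℝ and v ∈ ℝ, the matrix exponential of u(cos v · e_1 + sin v · e_2), where e_1 = diag(1,-1,0) and e_2 = E_{12}+E_{21}, equals the matrix [[cosh u + cos v sinh u, sin v sinh u, 0], [sin v sinh u, cosh u - cos v sinh u, 0], [0, 0, 1]]. -/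
open Matrix Real

noncomputable section

set_option maxHeartbeats 800000 in
theorem stmt17 (u v : ℝ) :
    NormedSpace.exp (u • (Real.cos v • e1 + Real.sin v • e2)) =
      !![Real.cosh u + Real.cos v * Real.sinh u, Real.sin v * Real.sinh u, 0;
         Real.sin v * Real.sinh u, Real.cosh u - Real.cos v * Real.sinh u, 0;
         0, 0, 1] := by
  set c := Real.cos (v/2)
  set s := Real.sin (v/2)
  have hcs : c^2 + s^2 = 1 := by rw [add_comm]; exact Real.sin_sq_add_cos_sq _
  have hcosv : Real.cos v = c^2 - s^2 := by
    have := Real.cos_two_mul (v/2)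
    have h2 : 2 * (v/2) = v := by ring
    rw [h2] at this; nlinarith [hcs]
  have hsinv : Real.sin v = 2 * s * c := by
    have := Real.sin_two_mul (v/2)
    have h2 : 2 * (v/2) = v := by ring
    rw [h2] at this; linarith
  set R : M3 := !![c,-s,0; s,c,0; 0,0,1] with hR
  set S : M3 := !![c,s,0; -s,c,0; 0,0,1] with hS
  have hRS : R * S = 1 := by
    ext i j; fin_cases i <;> fin_cases j <;>
      simp [hR, hS, Matrix.mul_apply, Fin.sum_univ_three, Matrix.vecHead, Matrix.vecTail] <;> linarith [hcs]
  have hSR : S * R = 1 := by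
    ext i j; fin_cases i <;> fin_cases j <;>
      simp [hR, hS, Matrix.mul_apply, Fin.sum_univ_three, Matrix.vecHead, Matrix.vecTail] <;> linarith [hcs]
  set U : (M3)ˣ := ⟨R, S, hRS, hSR⟩ with hU
  have hD : Matrix.diagonal ![u, -u, 0] = !![u,0,0; 0,-u,0; 0,0,0] := by
    ext i j; fin_cases i <;> fin_cases j <;> simp [Matrix.diagonal, Matrix.vecHead, Matrix.vecTail]
  have hA : u • (Real.cos v • e1 + Real.sin v • e2) =
      ↑U * Matrix.diagonal ![u, -u, 0] * ↑U⁻¹ := by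
    rw [hD]
    show _ = R * _ * S
    ext i j; fin_cases i <;> fin_cases j <;>
      simp [hR, hS, e1, e2, Matrix.mul_apply, Fin.sum_univ_three, Matrix.vecHead, Matrix.vecTail, hcosv, hsinv] <;> ring
  rw [hA, Matrix.exp_units_conj, Matrix.exp_diagonal]
  have hexp : NormedSpace.exp ![u, -u, 0] = ![Real.exp u, Real.exp (-u), 1] := by
    funext i
    rw [Pi.coe_exp]
    fin_cases i <;> simp [← Real.exp_eq_exp_ℝ]
  rw [hexp]
  have hDe : Matrix.diagonal ![Real.exp u, Real.exp (-u), 1] =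
      !![Real.exp u,0,0; 0,Real.exp (-u),0; 0,0,1] := by
    ext i j; fin_cases i <;> fin_cases j <;> simp [Matrix.diagonal, Matrix.vecHead, Matrix.vecTail]
  rw [hDe]
  show R * _ * S = _
  have hch : Real.cosh u = (Real.exp u + Real.exp (-u))/2 := Real.cosh_eq u
  have hsh : Real.sinh u = (Real.exp u - Real.exp (-u))/2 := Real.sinh_eq u
  ext i j; fin_cases i <;> fin_cases j <;>
    simp [hR, hS, Matrix.mul_apply, Fin.sum_univ_three, Matrix.vecHead, Matrix.vecTail,
      hch, hsh, hcosv, hsinv] <;>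
      first
        | linear_combination ((Real.exp u + Real.exp (-u))/2) * hcs
        | ring
end
end

section
/- Define R(X,Y)Z = (5/2)(⟨Y,Z⟩X - ⟨X,Z⟩Y) - (3/4)(⟨JY,Z⟩JX - ⟨JX,Z⟩JY + 2⟨X,JY⟩JZ) + (9/4)(⟨Y,J_1JZ⟩J_1JX - ⟨X,J_1JZ⟩J_1JY) + (3/4)(⟨J_1JY,Z⟩X - ⟨J_1JX,Z⟩Y + ⟨Y,Z⟩J_1JX - ⟨X,Z⟩J_1JY) - 3(⟨Y,FZ⟩FX - ⟨X,FZ⟩FY) on m = span{e_1,…,e_6}. For ε ∈ {-1,1}, X = ε e_1 + e_5 and Y = JX = -ε e_2 + e_6, the vector R(X,Y)Y = -4ε e_1 + 2 e_5 does not lie in span{X, Y}. -/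
open Matrix Real

noncomputable section

lemma ip_add_left (X Y Z : M3) : ip (X + Y) Z = ip X Z + ip Y Z := by
  simp [ip, add_mul] <;> try ring
lemma ip_add_right (X Y Z : M3) : ip X (Y + Z) = ip X Y + ip X Z := by
  simp [ip, mul_add] <;> try ring
lemma ip_smul_left (c : ℝ) (X Y : M3) : ip (c • X) Y = c * ip X Y := by
  simp [ip, smul_mul_assoc] <;> try ring
lemma ip_smul_right (c : ℝ) (X Y : M3) : ip X (c • Y) = c * ip X Y := by
  simp [ip, mul_smul_comm] <;> try ring
lemma ip_neg_left (X Y : M3) : ip (-X) Y = -ip X Y := by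
  simp [ip]
lemma ip_neg_right (X Y : M3) : ip X (-Y) = -ip X Y := by
  simp [ip]
lemma ip_sub_left (X Y Z : M3) : ip (X - Y) Z = ip X Z - ip Y Z := by
  simp [ip, sub_mul] <;> try ring
lemma ip_sub_right (X Y Z : M3) : ip X (Y - Z) = ip X Y - ip X Z := by
  simp [ip, mul_sub] <;> try ring

lemma ip11 : ip e1 e1 = -1 := by norm_num [ip, e1, Matrix.mul_fin_three, Matrix.trace_fin_three, Matrix.vecHead, Matrix.vecTail, Function.comp, Matrix.cons_val_two, Matrix.cons_val_one, Matrix.cons_val_zero, Matrix.tail_cons, Matrix.head_cons]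
lemma ip12 : ip e1 e2 = 0 := by norm_num [ip, e1, e2, Matrix.mul_fin_three, Matrix.trace_fin_three, Matrix.vecHead, Matrix.vecTail, Function.comp, Matrix.cons_val_two, Matrix.cons_val_one, Matrix.cons_val_zero, Matrix.tail_cons, Matrix.head_cons]
lemma ip15 : ip e1 e5 = 0 := by norm_num [ip, e1, e5, Matrix.mul_fin_three, Matrix.trace_fin_three, Matrix.vecHead, Matrix.vecTail, Function.comp, Matrix.cons_val_two, Matrix.cons_val_one, Matrix.cons_val_zero, Matrix.tail_cons, Matrix.head_cons]
lemma ip16 : ip e1 e6 = 0 := by norm_num [ip, e1, e6, Matrix.mul_fin_three, Matrix.trace_fin_three, Matrix.vecHead, Matrix.vecTail, Function.comp, Matrix.cons_val_two, Matrix.cons_val_one, Matrix.cons_val_zero, Matrix.tail_cons, Matrix.head_cons]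
lemma ip21 : ip e2 e1 = 0 := by norm_num [ip, e2, e1, Matrix.mul_fin_three, Matrix.trace_fin_three, Matrix.vecHead, Matrix.vecTail, Function.comp, Matrix.cons_val_two, Matrix.cons_val_one, Matrix.cons_val_zero, Matrix.tail_cons, Matrix.head_cons]
lemma ip22 : ip e2 e2 = -1 := by norm_num [ip, e2, Matrix.mul_fin_three, Matrix.trace_fin_three, Matrix.vecHead, Matrix.vecTail, Function.comp, Matrix.cons_val_two, Matrix.cons_val_one, Matrix.cons_val_zero, Matrix.tail_cons, Matrix.head_cons]
lemma ip25 : ip e2 e5 = 0 := by norm_num [ip, e2, e5, Matrix.mul_fin_three, Matrix.trace_fin_three, Matrix.vecHead, Matrix.vecTail, Function.comp, Matrix.cons_val_two, Matrix.cons_val_one, Matrix.cons_val_zero, Matrix.tail_cons, Matrix.head_cons]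
lemma ip26 : ip e2 e6 = 0 := by norm_num [ip, e2, e6, Matrix.mul_fin_three, Matrix.trace_fin_three, Matrix.vecHead, Matrix.vecTail, Function.comp, Matrix.cons_val_two, Matrix.cons_val_one, Matrix.cons_val_zero, Matrix.tail_cons, Matrix.head_cons]
lemma ip51 : ip e5 e1 = 0 := by norm_num [ip, e5, e1, Matrix.mul_fin_three, Matrix.trace_fin_three, Matrix.vecHead, Matrix.vecTail, Function.comp, Matrix.cons_val_two, Matrix.cons_val_one, Matrix.cons_val_zero, Matrix.tail_cons, Matrix.head_cons]
lemma ip52 : ip e5 e2 = 0 := by norm_num [ip, e5, e2, Matrix.mul_fin_three, Matrix.trace_fin_three, Matrix.vecHead, Matrix.vecTail, Function.comp, Matrix.cons_val_two, Matrix.cons_val_one, Matrix.cons_val_zero, Matrix.tail_cons, Matrix.head_cons]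
lemma ip55 : ip e5 e5 = 0 := by norm_num [ip, e5, Matrix.mul_fin_three, Matrix.trace_fin_three, Matrix.vecHead, Matrix.vecTail, Function.comp, Matrix.cons_val_two, Matrix.cons_val_one, Matrix.cons_val_zero, Matrix.tail_cons, Matrix.head_cons]
lemma ip56 : ip e5 e6 = 0 := by norm_num [ip, e5, e6, Matrix.mul_fin_three, Matrix.trace_fin_three, Matrix.vecHead, Matrix.vecTail, Function.comp, Matrix.cons_val_two, Matrix.cons_val_one, Matrix.cons_val_zero, Matrix.tail_cons, Matrix.head_cons]
lemma ip61 : ip e6 e1 = 0 := by norm_num [ip, e6, e1, Matrix.mul_fin_three, Matrix.trace_fin_three, Matrix.vecHead, Matrix.vecTail, Function.comp, Matrix.cons_val_two, Matrix.cons_val_one, Matrix.cons_val_zero, Matrix.tail_cons, Matrix.head_cons]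
lemma ip62 : ip e6 e2 = 0 := by norm_num [ip, e6, e2, Matrix.mul_fin_three, Matrix.trace_fin_three, Matrix.vecHead, Matrix.vecTail, Function.comp, Matrix.cons_val_two, Matrix.cons_val_one, Matrix.cons_val_zero, Matrix.tail_cons, Matrix.head_cons]
lemma ip65 : ip e6 e5 = 0 := by norm_num [ip, e6, e5, Matrix.mul_fin_three, Matrix.trace_fin_three, Matrix.vecHead, Matrix.vecTail, Function.comp, Matrix.cons_val_two, Matrix.cons_val_one, Matrix.cons_val_zero, Matrix.tail_cons, Matrix.head_cons]
lemma ip66 : ip e6 e6 = 0 := by norm_num [ip, e6, Matrix.mul_fin_three, Matrix.trace_fin_three, Matrix.vecHead, Matrix.vecTail, Function.comp, Matrix.cons_val_two, Matrix.cons_val_one, Matrix.cons_val_zero, Matrix.tail_cons, Matrix.head_cons]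

/-- the curvature-tensor expression of `(SL(3,ℝ)/H, g)` -/
def Rcurv (J J1 F : M3 →ₗ[ℝ] M3) (X Y Z : M3) : M3 :=
    (5/2 : ℝ) • (ip Y Z • X - ip X Z • Y)
  - (3/4 : ℝ) • (ip (J Y) Z • J X - ip (J X) Z • J Y + (2 : ℝ) • (ip X (J Y) • J Z))
  + (9/4 : ℝ) • (ip Y (J1 (J Z)) • J1 (J X) - ip X (J1 (J Z)) • J1 (J Y))
  + (3/4 : ℝ) • (ip (J1 (J Y)) Z • X - ip (J1 (J X)) Z • Y
      + ip Y Z • J1 (J X) - ip X Z • J1 (J Y))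
  - (3 : ℝ) • (ip Y (F Z) • F X - ip X (F Z) • F Y)

theorem stmt19 (J J1 F : M3 →ₗ[ℝ] M3) (hJ : isJ J) (hJ1 : isJ1 J1) (hF : isF F)
    (ε : ℝ) (hε : ε = 1 ∨ ε = -1) :
    let X : M3 := ε • e1 + e5
    let Y : M3 := -(ε • e2) + e6
    Rcurv J J1 F X Y Y = (-4 * ε) • e1 + (2 : ℝ) • e5 ∧
    (-4 * ε) • e1 + (2 : ℝ) • e5 ∉ Submodule.span ℝ ({X, Y} : Set M3) := by
  obtain ⟨j1, j2, j3, j4, j5, j6⟩ := hJ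
  obtain ⟨a1, a2, a3, a4, a5, a6⟩ := hJ1
  obtain ⟨f1, f2, f3, f4, f5, f6⟩ := hF
  intro X Y
  have hJX : J X = Y := by
    show J (ε • e1 + e5) = -(ε • e2) + e6
    rw [map_add, _root_.map_smul, j1, j5]; module
  have hJY : J Y = -X := by
    show J (-(ε • e2) + e6) = -(ε • e1 + e5)
    rw [map_add, map_neg, _root_.map_smul, j2, j6]; module
  have hJ1Y : J1 Y = ε • e1 - e5 := by
    show J1 (-(ε • e2) + e6) = _
    rw [map_add, map_neg, _root_.map_smul, a2, a6]; module
  have hJ1X : J1 X = ε • e2 + e6 := by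
    show J1 (ε • e1 + e5) = _
    rw [map_add, _root_.map_smul, a1, a5]
  have hFX : F X = -e6 := by
    show F (ε • e1 + e5) = _
    rw [map_add, _root_.map_smul, f1, f5]; module
  have hFY : F Y = e5 := by
    show F (-(ε • e2) + e6) = _
    rw [map_add, map_neg, _root_.map_smul, f2, f6]; module
  constructor
  · rw [Rcurv, hJY, hJX, hJ1Y, map_neg, hJ1X, hFY, hFX]
    unfold X Y
    simp only [ip_add_left, ip_add_right, ip_smul_left, ip_smul_right, ip_neg_left,
      ip_neg_right, ip_sub_left, ip_sub_right, ip11, ip12, ip15, ip16, ip21, ip22,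
      ip25, ip26, ip51, ip52, ip55, ip56, ip61, ip62, ip65, ip66]
    rcases hε with rfl | rfl <;> module
  · rw [Submodule.mem_span_pair]
    rintro ⟨a, b, hab⟩
    have hs : (0:ℝ) < Real.sqrt 2 := Real.sqrt_pos.mpr (by norm_num)
    have h00 := congrFun (congrFun hab 0) 0
    have h20 := congrFun (congrFun hab 2) 0
    unfold X Y at h00 h20
    simp [e1, e2, e5, e6, Matrix.add_apply, Matrix.smul_apply, smul_eq_mul, Matrix.vecHead, Matrix.vecTail, Function.comp] at h00 h20
    rcases hε with rfl | rfl <;> nlinarith [hs, h00, h20]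
end
end
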